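/- arXiv:2107.00584 — 2 statements merged into one kernel-verified Lean document; each statement's English description precedes it below -/
import Mathlib

section
/- Let t be a positive integer and G a flower group of type (c₀; c₁, …, c_k). For 0 ≤ i ≤ k write c_i = ν_i·ω_i where ω_i is the greatest divisor of c_i that is relatively prime to t. Then the number of φ_t-periodic elements of G equals ω₁ + ω₂ + ⋯ + ω_k − (k−1)·ω₀. -/
/-- A cyclic subgroup `C` of `G` is a μ-subgroup if it is not contained in any cyclic
subgroup of `G` other than `C` itself. -/
def IsMuSubgroup {G : Type*} [Group G] (C : Subgroup G) : Prop :=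
  IsCyclic ↥C ∧ ∀ K : Subgroup G, IsCyclic ↥K → C ≤ K → C = K

/-- A noncyclic group `G` is a flower group with pistil `C0` if any two distinct
μ-subgroups of `G` intersect exactly in `C0`. -/
def IsFlowerGroup {G : Type*} [Group G] (C0 : Subgroup G) : Prop :=
  ¬ IsCyclic G ∧
    ∀ C C' : Subgroup G, IsMuSubgroup C → IsMuSubgroup C' → C ≠ C' → C ⊓ C' = C0

/-- An element is φ_t-periodic iff its order is coprime to t. -/
lemma periodic_iff_coprime {G : Type*} [Group G] [Finite G] {t : ℕ} (ht : 0 < t) (g : G) :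
    (∃ m : ℕ, 1 ≤ m ∧ g ^ t ^ m = g) ↔ Nat.Coprime (orderOf g) t := by
  constructor
  · rintro ⟨m, hm, hg⟩
    have h1 : (1 : ℕ) ≤ t ^ m := Nat.one_le_pow _ _ ht
    have hmod : t ^ m ≡ 1 [MOD orderOf g] := by
      have : g ^ t ^ m = g ^ 1 := by simpa using hg
      exact pow_eq_pow_iff_modEq.mp this
    have hdvd : orderOf g ∣ t ^ m - 1 := (Nat.modEq_iff_dvd' h1).mp hmod.symm
    have h2 : Nat.gcd (orderOf g) t ∣ t ^ m := dvd_pow (Nat.gcd_dvd_right _ _) (by omega)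
    have h3 : Nat.gcd (orderOf g) t ∣ t ^ m - 1 := (Nat.gcd_dvd_left _ _).trans hdvd
    have h4 : Nat.gcd (orderOf g) t ∣ t ^ m - (t ^ m - 1) := Nat.dvd_sub h2 h3
    rw [Nat.sub_sub_self h1] at h4
    exact Nat.coprime_iff_gcd_eq_one.mpr (Nat.dvd_one.mp h4)
  · intro h
    have hn : 0 < orderOf g := orderOf_pos g
    refine ⟨(orderOf g).totient, Nat.totient_pos.mpr hn, ?_⟩
    have hmod : t ^ (orderOf g).totient ≡ 1 [MOD orderOf g] := Nat.ModEq.pow_totient h.symm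
    have : g ^ t ^ (orderOf g).totient = g ^ 1 := pow_eq_pow_iff_modEq.mpr hmod
    simpa using this

/-- In a finite cyclic group, the number of solutions of `a ^ n = 1` equals `n`
whenever `n` divides the order of the group. -/
lemma card_pow_eq_one_of_cyclic {H : Type*} [Group H] [Fintype H] [IsCyclic H] [DecidableEq H]
    {n : ℕ} (hdvd : n ∣ Fintype.card H) (hn0 : 0 < n) :
    (Finset.univ.filter (fun a : H => a ^ n = 1)).card = n := by
  classical
  obtain ⟨g, hg⟩ := IsCyclic.exists_generator (α := H)
  have hog : orderOf g = Fintype.card H := by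
    rw [orderOf_eq_card_of_forall_mem_zpowers hg, Nat.card_eq_fintype_card]
  have hogne : orderOf g ≠ 0 := by
    rw [hog]; exact Fintype.card_ne_zero
  have hdvd' : n ∣ orderOf g := by rw [hog]; exact hdvd
  set h := g ^ (orderOf g / n) with hh
  have hoh : orderOf h = n := orderOf_pow_orderOf_div hogne hdvd'
  have hsub : ((Subgroup.zpowers h : Subgroup H) : Set H).toFinset ⊆
      Finset.univ.filter (fun a : H => a ^ n = 1) := by
    intro x hx
    rw [Set.mem_toFinset, SetLike.mem_coe, Subgroup.mem_zpowers_iff] at hx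
    obtain ⟨j, hj⟩ := hx
    simp only [Finset.mem_filter, Finset.mem_univ, true_and]
    have hh1 : h ^ n = 1 := by rw [← hoh]; exact pow_orderOf_eq_one h
    rw [← hj, ← zpow_natCast, ← zpow_mul, mul_comm, zpow_mul, zpow_natCast, hh1, one_zpow]
  have hcard : ((Subgroup.zpowers h : Subgroup H) : Set H).toFinset.card = n := by
    simp only [Set.toFinset_card, SetLike.coe_sort_coe]
    rw [Fintype.card_zpowers, hoh]
  refine le_antisymm (IsCyclic.card_pow_eq_one_le hn0) ?_
  calc n = ((Subgroup.zpowers h : Subgroup H) : Set H).toFinset.card := hcard.symm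
    _ ≤ _ := Finset.card_le_card hsub

/-- The number of elements of a finite cyclic subgroup `K` whose order is coprime to `t`
equals the largest divisor of `|K|` coprime to `t`. -/
lemma card_coprime_in_cyclic_subgroup {G : Type*} [Group G] [Fintype G] {t : ℕ}
    (K : Subgroup G) (hK : IsCyclic ↥K) {w : ℕ} (hdvd : w ∣ Nat.card K)
    (hcop : Nat.Coprime w t) (hmax : ∀ d, d ∣ Nat.card K → Nat.Coprime d t → d ≤ w) :
    Nat.card {g : G // g ∈ K ∧ Nat.Coprime (orderOf g) t} = w := by
  classical
  haveI := hK
  have hw0 : 0 < w := Nat.pos_of_dvd_of_pos hdvd Nat.card_pos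
  -- characterize the predicate inside K
  have hchar : ∀ g : G, g ∈ K → (Nat.Coprime (orderOf g) t ↔ orderOf g ∣ w) := by
    intro g hg
    constructor
    · intro hc
      have hdK : orderOf g ∣ Nat.card K := by
        have := orderOf_dvd_natCard (⟨g, hg⟩ : K)
        rwa [Subgroup.orderOf_mk] at this
      have hl : Nat.lcm (orderOf g) w ∣ Nat.card K := Nat.lcm_dvd hdK hdvd
      have hlc : Nat.Coprime (Nat.lcm (orderOf g) w) t :=
        Nat.Coprime.coprime_dvd_left (Nat.lcm_dvd_mul _ _) (hc.mul hcop)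
      have hle : Nat.lcm (orderOf g) w ≤ w := hmax _ hl hlc
      have hwl : w ∣ Nat.lcm (orderOf g) w := Nat.dvd_lcm_right _ _
      have hlpos : 0 < Nat.lcm (orderOf g) w := Nat.lcm_pos (orderOf_pos g) hw0
      have : Nat.lcm (orderOf g) w = w := le_antisymm hle (Nat.le_of_dvd hlpos hwl)
      exact this ▸ Nat.dvd_lcm_left _ _
    · intro hd
      exact Nat.Coprime.coprime_dvd_left hd hcop
  have hfc : Nat.card {g : G // g ∈ K ∧ Nat.Coprime (orderOf g) t}
      = Nat.card {g : G // g ∈ K ∧ orderOf g ∣ w} := by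
    apply Nat.card_congr
    apply Equiv.subtypeEquivRight
    intro g
    constructor
    · rintro ⟨hg, hc⟩; exact ⟨hg, (hchar g hg).mp hc⟩
    · rintro ⟨hg, hc⟩; exact ⟨hg, (hchar g hg).mpr hc⟩
  rw [hfc]
  -- transfer to the subgroup
  have hequiv : {g : G // g ∈ K ∧ orderOf g ∣ w} ≃ {x : ↥K // x ^ w = 1} :=
    { toFun := fun g => ⟨⟨g.1, g.2.1⟩, by
        rw [← orderOf_dvd_iff_pow_eq_one, Subgroup.orderOf_mk]; exact g.2.2⟩
      invFun := fun x => ⟨(x.1 : G), x.1.2, by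
        rw [Subgroup.orderOf_coe, orderOf_dvd_iff_pow_eq_one]; exact x.2⟩
      left_inv := fun g => rfl
      right_inv := fun x => rfl }
  rw [Nat.card_congr hequiv, Nat.card_eq_fintype_card, Fintype.card_subtype]
  exact card_pow_eq_one_of_cyclic (by rw [← Nat.card_eq_fintype_card]; exact hdvd) hw0

/-- Every element of a finite group lies in some μ-subgroup. -/
lemma exists_mu_subgroup {G : Type*} [Group G] [Finite G] (g : G) :
    ∃ C : Subgroup G, IsMuSubgroup C ∧ g ∈ C := by
  haveI : Finite (Subgroup G) :=
    Finite.of_injective (fun K : Subgroup G => (K : Set G)) SetLike.coe_injective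
  set S : Set (Subgroup G) := {K | IsCyclic ↥K ∧ g ∈ K} with hS
  have hfin : S.Finite := Set.toFinite S
  have hcyc : IsCyclic ↥(Subgroup.zpowers g) := by
    refine ⟨⟨⟨g, Subgroup.mem_zpowers g⟩, fun x => ?_⟩⟩
    obtain ⟨n, hn⟩ := Subgroup.mem_zpowers_iff.mp x.2
    refine Subgroup.mem_zpowers_iff.mpr ⟨n, Subtype.ext ?_⟩
    push_cast
    exact hn
  have hne : S.Nonempty := ⟨Subgroup.zpowers g, hcyc, Subgroup.mem_zpowers g⟩
  obtain ⟨M, hMS, hmax⟩ := Set.Finite.exists_maximalFor id S hfin hne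
  exact ⟨M, ⟨hMS.1, fun K hK hle => le_antisymm hle (hmax ⟨hK, hle hMS.2⟩ hle)⟩, hMS.2⟩

/-- If G is a flower group of type (c₀; c₁, …, c_k) and ω_i is the greatest
divisor of c_i coprime to t, then the number of φ_t-periodic elements of G equals
ω₁ + ⋯ + ω_k − (k−1)·ω₀. -/
theorem stmt14 (t : ℕ) (ht : 0 < t) {G : Type*} [Group G] [Finite G]
    (C0 : Subgroup G) (hG : IsFlowerGroup C0)
    (k : ℕ) (P : Fin k → Subgroup G) (hinj : Function.Injective P)
    (hpetals : ∀ C : Subgroup G, IsMuSubgroup C ↔ ∃ i, C = P i)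
    (ω0 : ℕ) (ω : Fin k → ℕ)
    (hω0dvd : ω0 ∣ Nat.card C0) (hω0cop : Nat.Coprime ω0 t)
    (hω0max : ∀ d : ℕ, d ∣ Nat.card C0 → Nat.Coprime d t → d ≤ ω0)
    (hωdvd : ∀ i, ω i ∣ Nat.card (P i)) (hωcop : ∀ i, Nat.Coprime (ω i) t)
    (hωmax : ∀ i, ∀ d : ℕ, d ∣ Nat.card (P i) → Nat.Coprime d t → d ≤ ω i) :
    Nat.card {g : G // ∃ m : ℕ, 1 ≤ m ∧ g ^ t ^ m = g} + (k - 1) * ω0 = ∑ i, ω i := by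
  classical
  haveI : Fintype G := Fintype.ofFinite G
  -- each element lies in some petal
  have hcover : ∀ g : G, ∃ i, g ∈ P i := by
    intro g
    obtain ⟨C, hC, hgC⟩ := exists_mu_subgroup g
    obtain ⟨i, rfl⟩ := (hpetals C).mp hC
    exact ⟨i, hgC⟩
  -- petals are μ-subgroups
  have hmu : ∀ i, IsMuSubgroup (P i) := fun i => (hpetals (P i)).mpr ⟨i, rfl⟩
  -- there are at least two petals
  have htwo : ∃ i j : Fin k, i ≠ j := by
    by_contra hcon
    push_neg at hcon
    obtain ⟨i0, _⟩ := hcover 1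
    have htop : P i0 = ⊤ := by
      rw [Subgroup.eq_top_iff']
      intro g
      obtain ⟨j, hj⟩ := hcover g
      rwa [hcon j i0] at hj
    have : IsCyclic G := by
      haveI : IsCyclic ↥(⊤ : Subgroup G) := htop ▸ (hmu i0).1
      exact isCyclic_of_surjective Subgroup.topEquiv.toMonoidHom Subgroup.topEquiv.surjective
    exact hG.1 this
  obtain ⟨i0, j0, hij0⟩ := htwo
  -- pistil is contained in every petal, and pairwise intersections equal the pistil
  have hinter : ∀ i j : Fin k, i ≠ j → P i ⊓ P j = C0 := by
    intro i j hij
    exact hG.2 (P i) (P j) (hmu i) (hmu j) (fun h => hij (hinj h))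
  have hC0le : ∀ i, C0 ≤ P i := by
    intro i
    by_cases h : i = i0
    · rw [← hinter i j0 (h ▸ hij0)]; exact inf_le_left
    · rw [← hinter i i0 h]; exact inf_le_left
  have hk1 : 1 ≤ k := i0.pos
  -- pistil is cyclic
  have hC0cyc : IsCyclic ↥C0 := by
    haveI := (hmu i0).1
    exact Subgroup.isCyclic_of_le (hC0le i0)
  -- the finsets
  set s : Finset G := Finset.univ.filter (fun g : G => Nat.Coprime (orderOf g) t) with hs
  set f : Fin k → Finset G :=
    fun i => Finset.univ.filter (fun g : G => g ∈ P i ∧ Nat.Coprime (orderOf g) t) with hf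
  set s0 : Finset G :=
    Finset.univ.filter (fun g : G => g ∈ C0 ∧ Nat.Coprime (orderOf g) t) with hs0
  have hbridge : ∀ (p : G → Prop) [DecidablePred p],
      (Finset.univ.filter p).card = Nat.card {g : G // p g} := by
    intro p hp
    rw [Nat.card_eq_fintype_card, Fintype.card_subtype]
  have hfcard : ∀ i, (f i).card = ω i := by
    intro i
    rw [hf, hbridge]
    exact card_coprime_in_cyclic_subgroup (P i) (hmu i).1 (hωdvd i) (hωcop i) (hωmax i)
  have hs0card : s0.card = ω0 := by
    rw [hs0, hbridge]
    exact card_coprime_in_cyclic_subgroup C0 hC0cyc hω0dvd hω0cop hω0max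
  have hs0sub : ∀ i, s0 ⊆ f i := by
    intro i g hg
    rw [hs0, Finset.mem_filter] at hg
    rw [hf, Finset.mem_filter]
    exact ⟨hg.1, hC0le i hg.2.1, hg.2.2⟩
  have hfs : ∀ i, f i ⊆ s := by
    intro i g hg
    rw [hf, Finset.mem_filter] at hg
    rw [hs, Finset.mem_filter]
    exact ⟨hg.1, hg.2.2⟩
  have hfinter : ∀ i j : Fin k, i ≠ j → f i ∩ f j = s0 := by
    intro i j hij
    ext g
    simp only [hf, hs0, Finset.mem_inter, Finset.mem_filter, Finset.mem_univ, true_and]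
    constructor
    · rintro ⟨⟨hgi, hc⟩, ⟨hgj, _⟩⟩
      have : g ∈ P i ⊓ P j := Subgroup.mem_inf.mpr ⟨hgi, hgj⟩
      rw [hinter i j hij] at this
      exact ⟨this, hc⟩
    · rintro ⟨hg0, hc⟩
      exact ⟨⟨hC0le i hg0, hc⟩, ⟨hC0le j hg0, hc⟩⟩
  -- decomposition of s
  have hdecomp : s = s0 ∪ Finset.univ.biUnion (fun i => f i \ s0) := by
    ext g
    constructor
    · intro hg
      rw [Finset.mem_union]
      by_cases h0 : g ∈ s0
      · exact Or.inl h0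
      · refine Or.inr (Finset.mem_biUnion.mpr ?_)
        rw [hs, Finset.mem_filter] at hg
        obtain ⟨i, hi⟩ := hcover g
        exact ⟨i, Finset.mem_univ i, Finset.mem_sdiff.mpr
          ⟨Finset.mem_filter.mpr ⟨Finset.mem_univ g, hi, hg.2⟩, h0⟩⟩
    · intro hg
      rcases Finset.mem_union.mp hg with h | h
      · exact hfs i0 (hs0sub i0 h)
      · obtain ⟨i, _, hi⟩ := Finset.mem_biUnion.mp h
        exact hfs i (Finset.mem_sdiff.mp hi).1
  have hdisj0 : Disjoint s0 (Finset.univ.biUnion (fun i => f i \ s0)) := by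
    rw [Finset.disjoint_left]
    intro g hg hgb
    obtain ⟨i, _, hi⟩ := Finset.mem_biUnion.mp hgb
    exact (Finset.mem_sdiff.mp hi).2 hg
  have hpair : ∀ i ∈ Finset.univ, ∀ j ∈ Finset.univ, i ≠ j →
      Disjoint (f i \ s0) (f j \ s0) := by
    intro i _ j _ hij
    rw [Finset.disjoint_left]
    intro g hgi hgj
    have hg0 : g ∈ s0 := by
      rw [← hfinter i j hij, Finset.mem_inter]
      exact ⟨(Finset.mem_sdiff.mp hgi).1, (Finset.mem_sdiff.mp hgj).1⟩
    exact (Finset.mem_sdiff.mp hgi).2 hg0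
  have hscard : s.card = ω0 + ∑ i, ((f i).card - ω0) := by
    rw [hdecomp, Finset.card_union_of_disjoint hdisj0, Finset.card_biUnion hpair, hs0card]
    congr 1
    refine Finset.sum_congr rfl (fun i _ => ?_)
    rw [Finset.card_sdiff_of_subset (hs0sub i), hs0card]
  have hle : ∀ i, ω0 ≤ ω i := by
    intro i
    have := Finset.card_le_card (hs0sub i)
    rwa [hs0card, hfcard i] at this
  -- identify the Nat.card with s.card
  have hnat : Nat.card {g : G // ∃ m : ℕ, 1 ≤ m ∧ g ^ t ^ m = g} = s.card := by
    rw [Nat.card_congr (Equiv.subtypeEquivRight (fun g => periodic_iff_coprime ht g)),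
      Nat.card_eq_fintype_card, Fintype.card_subtype]
  rw [hnat, hscard]
  have hsum : ∀ i, ((f i).card - ω0) + ω0 = ω i := by
    intro i
    rw [hfcard i]
    exact Nat.sub_add_cancel (hle i)
  calc ω0 + ∑ i, ((f i).card - ω0) + (k - 1) * ω0
      = ∑ i, ((f i).card - ω0) + (1 + (k - 1)) * ω0 := by ring
    _ = ∑ i, ((f i).card - ω0) + k * ω0 := by rw [Nat.add_sub_cancel' hk1]
    _ = ∑ i, ((f i).card - ω0) + ∑ _i : Fin k, ω0 := by
        rw [Finset.sum_const, Finset.card_univ, Fintype.card_fin, smul_eq_mul]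
    _ = ∑ i, (((f i).card - ω0) + ω0) := by rw [Finset.sum_add_distrib]
    _ = ∑ i, ω i := Finset.sum_congr rfl (fun i _ => hsum i)
end

section
/- For n ≥ 2, the generalized quaternion group Q_{4n} = ⟨a, b | a^{2n} = 1, b² = a^n, b·a·b⁻¹ = a⁻¹⟩ of order 4n is a flower group with pistil C₀ = {1, a^n}. Moreover, its set of petals consists of exactly n cyclic subgroups of order 4 (namely ⟨a^i b⟩ for 1 ≤ i ≤ n) and one cyclic subgroup of order 2n (namely ⟨a⟩). -/
open Subgroup QuaternionGroup

lemma exists_zpowers_eq {G : Type*} [Group G] {K : Subgroup G} (h : IsCyclic ↥K) :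
    ∃ g : G, K = zpowers g := by
  obtain ⟨⟨g, hg⟩, hgen⟩ := h
  refine ⟨g, le_antisymm ?_ (zpowers_le.2 hg)⟩
  intro x hx
  obtain ⟨k, hk⟩ := hgen ⟨x, hx⟩
  exact ⟨k, congrArg Subtype.val hk⟩

lemma mem_zpowers_fin {G : Type*} [Group G] [Finite G] {g x : G} (h : x ∈ zpowers g) :
    ∃ m : ℕ, m < orderOf g ∧ g ^ m = x := by
  obtain ⟨m, hm⟩ := mem_powers_iff_mem_zpowers.2 h
  exact ⟨m % orderOf g, Nat.mod_lt _ (orderOf_pos g), by rw [pow_mod_orderOf]; exact hm⟩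

section Quat

lemma cast_inj_2n (n : ℕ) (hn : 2 ≤ n) {p q : ℕ} (hp : p < 2 * n) (hq : q < 2 * n)
    (h : (p : ZMod (2 * n)) = q) : p = q := by
  have : NeZero (2 * n) := ⟨by omega⟩
  have := congrArg ZMod.val h
  rwa [ZMod.val_cast_of_lt hp, ZMod.val_cast_of_lt hq] at this

lemma nn_zero (n : ℕ) : ((n : ZMod (2 * n)) + n = 0) := by
  rw [← Nat.cast_add, show n + n = 2 * n by ring, ZMod.natCast_self]

lemma a_eq_iff (n : ℕ) {i j : ZMod (2 * n)} : (a i : QuaternionGroup n) = a j ↔ i = j := by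
  constructor
  · intro h; injection h
  · rintro rfl; rfl

lemma xa_eq_iff (n : ℕ) {i j : ZMod (2 * n)} : (xa i : QuaternionGroup n) = xa j ↔ i = j := by
  constructor
  · intro h; injection h
  · rintro rfl; rfl

lemma a_ne_xa (n : ℕ) {i j : ZMod (2 * n)} : (a i : QuaternionGroup n) ≠ xa j := by
  intro h; injection h

lemma one_ne_n (n : ℕ) (hn : 2 ≤ n) : (1 : ZMod (2 * n)) ≠ (n : ZMod (2 * n)) := by
  intro h
  have := cast_inj_2n n hn (p := 1) (q := n) (by omega) (by omega) (by exact_mod_cast h)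
  omega

lemma n_ne_zero' (n : ℕ) (hn : 2 ≤ n) : ((n : ZMod (2 * n)) ≠ 0) := by
  intro h
  have := cast_inj_2n n hn (p := n) (q := 0) (by omega) (by omega) (by exact_mod_cast h)
  omega

lemma one_ne_zero_zmod (n : ℕ) (hn : 2 ≤ n) : ((1 : ZMod (2 * n)) ≠ 0) := by
  intro h
  have := cast_inj_2n n hn (p := 1) (q := 0) (by omega) (by omega) (by exact_mod_cast h)
  omega

lemma mem_zpowers_a_one (n : ℕ) (hn : 2 ≤ n) {g : QuaternionGroup n} :
    g ∈ zpowers (a 1 : QuaternionGroup n) ↔ ∃ i, g = a i := by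
  have : NeZero n := ⟨by omega⟩
  constructor
  · intro h
    obtain ⟨m, -, rfl⟩ := mem_zpowers_fin h
    exact ⟨m, by rw [a_one_pow]⟩
  · rintro ⟨i, rfl⟩
    refine ⟨(i.val : ℤ), ?_⟩
    show (a 1 : QuaternionGroup n) ^ ((i.val : ℕ) : ℤ) = a i
    rw [zpow_natCast, a_one_pow, ZMod.natCast_val, ZMod.cast_id]

lemma xa_cube (n : ℕ) (j : ZMod (2 * n)) :
    (xa j : QuaternionGroup n) ^ 3 = xa (j + (n : ZMod (2 * n))) := by
  have h2 : (xa j : QuaternionGroup n) ^ 3 = xa j ^ 2 * xa j := by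
    rw [pow_succ]
  rw [h2, xa_sq, a_mul_xa]
  congr 1
  have h := nn_zero n
  linear_combination -h

lemma mem_zpowers_xa (n : ℕ) (hn : 2 ≤ n) {j : ZMod (2 * n)} {g : QuaternionGroup n} :
    g ∈ zpowers (xa j) ↔
      g = 1 ∨ g = a n ∨ g = xa j ∨ g = xa (j + (n : ZMod (2 * n))) := by
  have : NeZero n := ⟨by omega⟩
  constructor
  · intro h
    obtain ⟨m, hm, rfl⟩ := mem_zpowers_fin h
    rw [orderOf_xa] at hm
    interval_cases m
    · exact Or.inl (pow_zero _)
    · exact Or.inr (Or.inr (Or.inl (pow_one _)))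
    · exact Or.inr (Or.inl (xa_sq j))
    · exact Or.inr (Or.inr (Or.inr (xa_cube n j)))
  · rintro (rfl | rfl | rfl | rfl)
    · exact one_mem _
    · refine ⟨2, ?_⟩
      show (xa j : QuaternionGroup n) ^ ((2 : ℕ) : ℤ) = a n
      rw [zpow_natCast, xa_sq]
    · exact mem_zpowers _
    · refine ⟨3, ?_⟩
      show (xa j : QuaternionGroup n) ^ ((3 : ℕ) : ℤ) = xa (j + (n : ZMod (2 * n)))
      rw [zpow_natCast, xa_cube]

lemma zpowers_xa_add_n (n : ℕ) (hn : 2 ≤ n) (j : ZMod (2 * n)) :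
    zpowers (xa (j + (n : ZMod (2 * n))) : QuaternionGroup n) = zpowers (xa j) := by
  apply le_antisymm
  · exact zpowers_le.2 ((mem_zpowers_xa n hn).2 (Or.inr (Or.inr (Or.inr rfl))))
  · refine zpowers_le.2 ((mem_zpowers_xa n hn).2 (Or.inr (Or.inr (Or.inr ?_))))
    rw [add_assoc, nn_zero, add_zero]

lemma mem_zpowers_a_n (n : ℕ) (hn : 2 ≤ n) {g : QuaternionGroup n} :
    g ∈ zpowers (a n : QuaternionGroup n) ↔ g = 1 ∨ g = a n := by
  have : NeZero n := ⟨by omega⟩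
  have ho : orderOf (a n : QuaternionGroup n) = 2 := by
    refine orderOf_eq_prime ?_ ?_
    · rw [sq, a_mul_a, nn_zero, one_def]
    · rw [one_def, Ne, a_eq_iff]; exact n_ne_zero' n hn
  constructor
  · intro h
    obtain ⟨m, hm, rfl⟩ := mem_zpowers_fin h
    rw [ho] at hm
    interval_cases m
    · exact Or.inl (pow_zero _)
    · exact Or.inr (pow_one _)
  · rintro (rfl | rfl)
    · exact one_mem _
    · exact mem_zpowers _

end Quat

lemma isCyclic_zpowers {G : Type*} [Group G] (g : G) : IsCyclic ↥(Subgroup.zpowers g) := by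
  refine ⟨⟨⟨g, Subgroup.mem_zpowers g⟩, ?_⟩⟩
  rintro ⟨x, hx⟩
  obtain ⟨k, hk⟩ := Subgroup.mem_zpowers_iff.1 hx
  exact ⟨k, Subtype.ext (by rw [SubgroupClass.coe_zpow]; exact hk)⟩

lemma mu_a_one (n : ℕ) (hn : 2 ≤ n) :
    IsMuSubgroup (zpowers (a 1 : QuaternionGroup n)) := by
  refine ⟨_root_.isCyclic_zpowers _, fun K hK hle => ?_⟩
  obtain ⟨g, rfl⟩ := exists_zpowers_eq hK
  cases g with
  | a i =>
    exact le_antisymm hle (zpowers_le.2 ((mem_zpowers_a_one n hn).2 ⟨i, rfl⟩))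
  | xa j =>
    exfalso
    have h1 : (a 1 : QuaternionGroup n) ∈ zpowers (xa j) := hle (mem_zpowers _)
    rcases (mem_zpowers_xa n hn).1 h1 with h | h | h | h
    · rw [one_def] at h; exact one_ne_zero_zmod n hn ((a_eq_iff n).1 h)
    · exact one_ne_n n hn ((a_eq_iff n).1 h)
    · exact a_ne_xa n h
    · exact a_ne_xa n h

lemma mu_xa (n : ℕ) (hn : 2 ≤ n) (j : ZMod (2 * n)) :
    IsMuSubgroup (zpowers (xa j : QuaternionGroup n)) := by
  refine ⟨_root_.isCyclic_zpowers _, fun K hK hle => ?_⟩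
  obtain ⟨g, rfl⟩ := exists_zpowers_eq hK
  cases g with
  | a i =>
    exfalso
    have h1 : (xa j : QuaternionGroup n) ∈ zpowers (a i) := hle (mem_zpowers _)
    have h2 : (xa j : QuaternionGroup n) ∈ zpowers (a 1 : QuaternionGroup n) :=
      zpowers_le.2 ((mem_zpowers_a_one n hn).2 ⟨i, rfl⟩) h1
    obtain ⟨i', hi'⟩ := (mem_zpowers_a_one n hn).1 h2
    exact a_ne_xa n hi'.symm
  | xa m =>
    refine le_antisymm hle (zpowers_le.2 ?_)
    have h1 : (xa j : QuaternionGroup n) ∈ zpowers (xa m) := hle (mem_zpowers _)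
    rcases (mem_zpowers_xa n hn).1 h1 with h | h | h | h
    · rw [one_def] at h; exact absurd h.symm (a_ne_xa n)
    · exact absurd h.symm (a_ne_xa n)
    · rw [← (xa_eq_iff n).1 h]; exact mem_zpowers _
    · have hm : m = j + (n : ZMod (2 * n)) := by
        rw [(xa_eq_iff n).1 h, add_assoc, nn_zero, add_zero]
      rw [hm]
      exact (mem_zpowers_xa n hn).2 (Or.inr (Or.inr (Or.inr rfl)))

lemma zpowers_xa_eq_of_mem (n : ℕ) (hn : 2 ≤ n) {p q : ZMod (2 * n)}
    (h : (xa p : QuaternionGroup n) ∈ zpowers (xa q)) :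
    zpowers (xa p : QuaternionGroup n) = zpowers (xa q) := by
  rcases (mem_zpowers_xa n hn).1 h with h1 | h1 | h1 | h1
  · rw [one_def] at h1; exact absurd h1.symm (a_ne_xa n)
  · exact absurd h1.symm (a_ne_xa n)
  · rw [(xa_eq_iff n).1 h1]
  · rw [(xa_eq_iff n).1 h1, zpowers_xa_add_n n hn]

lemma zpowers_xa_normalize (n : ℕ) (hn : 2 ≤ n) (j : ZMod (2 * n)) :
    ∃ i : Fin n, zpowers (xa j : QuaternionGroup n) =
      zpowers (xa (((i : ℕ) + 1 : ℕ) : ZMod (2 * n))) := by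
  have h2n : NeZero (2 * n) := ⟨by omega⟩
  have hval : j.val < 2 * n := ZMod.val_lt j
  have hj : ((j.val : ℕ) : ZMod (2 * n)) = j := by rw [ZMod.natCast_val, ZMod.cast_id]
  rcases Nat.lt_or_ge j.val (n + 1) with h1 | h1
  · rcases Nat.eq_zero_or_pos j.val with h0 | h0
    · refine ⟨⟨n - 1, by omega⟩, ?_⟩
      have hj0 : j = 0 := by rw [← hj, h0, Nat.cast_zero]
      have key := zpowers_xa_add_n n hn (n : ZMod (2 * n))
      rw [nn_zero] at key
      rw [hj0]
      have hval1 : ((⟨n - 1, by omega⟩ : Fin n) : ℕ) + 1 = n := by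
        show n - 1 + 1 = n
        omega
      rw [hval1, ← key]
    · refine ⟨⟨j.val - 1, by omega⟩, ?_⟩
      congr 2
      simp only []
      rw [show j.val - 1 + 1 = j.val by omega, hj]
  · refine ⟨⟨j.val - n - 1, by omega⟩, ?_⟩
    have hcast : (((j.val - n - 1 + 1 : ℕ)) : ZMod (2 * n)) + (n : ZMod (2 * n)) = j := by
      rw [← Nat.cast_add, show j.val - n - 1 + 1 + n = j.val by omega, hj]
    rw [← zpowers_xa_add_n n hn ((((j.val - n - 1) : ℕ) + 1 : ℕ) : ZMod (2 * n))]
    rw [hcast]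

lemma xa_zpowers_inj (n : ℕ) (hn : 2 ≤ n) (i i' : Fin n)
    (h : zpowers (xa (((i : ℕ) + 1 : ℕ) : ZMod (2 * n)) : QuaternionGroup n) =
      zpowers (xa (((i' : ℕ) + 1 : ℕ) : ZMod (2 * n)))) : i = i' := by
  have hi := i.isLt
  have hi' := i'.isLt
  have hm : (xa (((i : ℕ) + 1 : ℕ) : ZMod (2 * n)) : QuaternionGroup n) ∈
      zpowers (xa (((i' : ℕ) + 1 : ℕ) : ZMod (2 * n))) := h ▸ mem_zpowers _
  rcases (mem_zpowers_xa n hn).1 hm with h1 | h1 | h1 | h1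
  · rw [one_def] at h1; exact absurd h1.symm (a_ne_xa n)
  · exact absurd h1.symm (a_ne_xa n)
  · have h2 := (xa_eq_iff n).1 h1
    have h3 := cast_inj_2n n hn (by omega) (by omega) h2
    exact Fin.ext (by omega)
  · exfalso
    have h2 := (xa_eq_iff n).1 h1
    rw [show ((((i' : ℕ) + 1 : ℕ)) : ZMod (2 * n)) + (n : ZMod (2 * n)) =
        (((i' : ℕ) + 1 + n : ℕ) : ZMod (2 * n)) by push_cast; ring] at h2
    rcases Nat.lt_or_ge ((i' : ℕ) + 1 + n) (2 * n) with hc | hc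
    · have := cast_inj_2n n hn (by omega) hc h2
      omega
    · have hc2 : (i' : ℕ) + 1 + n = 2 * n := by omega
      rw [hc2, ZMod.natCast_self] at h2
      have := cast_inj_2n n hn (p := (i : ℕ) + 1) (q := 0) (by omega) (by omega)
        (by rw [h2]; simp)
      omega

lemma not_cyclic (n : ℕ) (hn : 2 ≤ n) : ¬ IsCyclic (QuaternionGroup n) := by
  intro h
  obtain ⟨g, hg⟩ := h.exists_generator
  obtain ⟨k1, hk1⟩ := hg (a 1 : QuaternionGroup n)
  obtain ⟨k2, hk2⟩ := hg (xa 0 : QuaternionGroup n)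
  have hcomm : (a 1 : QuaternionGroup n) * xa 0 = xa 0 * a 1 := by
    rw [← hk1, ← hk2, ← zpow_add, ← zpow_add, add_comm]
  rw [a_mul_xa, xa_mul_a] at hcomm
  have h2 := (xa_eq_iff n).1 hcomm
  have h3 : ((2 : ℕ) : ZMod (2 * n)) = 0 := by push_cast; linear_combination -h2
  have := cast_inj_2n n hn (p := 2) (q := 0) (by omega) (by omega) (by exact_mod_cast h3)
  omega

lemma inf_a1_xa (n : ℕ) (hn : 2 ≤ n) (q : ZMod (2 * n)) :
    zpowers (a 1 : QuaternionGroup n) ⊓ zpowers (xa q) =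
      zpowers (a (n : ZMod (2 * n)) : QuaternionGroup n) := by
  ext g
  simp only [Subgroup.mem_inf]
  rw [mem_zpowers_a_n n hn, mem_zpowers_xa n hn, mem_zpowers_a_one n hn]
  constructor
  · rintro ⟨⟨i, rfl⟩, h1 | h1 | h1 | h1⟩
    · exact Or.inl h1
    · exact Or.inr h1
    · exact absurd h1 (a_ne_xa n)
    · exact absurd h1 (a_ne_xa n)
  · rintro (rfl | rfl)
    · exact ⟨⟨0, one_def⟩, Or.inl rfl⟩
    · exact ⟨⟨n, rfl⟩, Or.inr (Or.inl rfl)⟩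

lemma inf_xa_xa (n : ℕ) (hn : 2 ≤ n) (p q : ZMod (2 * n))
    (hne : zpowers (xa p : QuaternionGroup n) ≠ zpowers (xa q)) :
    zpowers (xa p : QuaternionGroup n) ⊓ zpowers (xa q) =
      zpowers (a (n : ZMod (2 * n)) : QuaternionGroup n) := by
  ext g
  simp only [Subgroup.mem_inf]
  rw [mem_zpowers_a_n n hn, mem_zpowers_xa n hn, mem_zpowers_xa n hn]
  constructor
  · rintro ⟨hp, hq⟩
    rcases hp with rfl | rfl | rfl | rfl
    · exact Or.inl rfl
    · exact Or.inr rfl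
    · exact absurd (zpowers_xa_eq_of_mem n hn ((mem_zpowers_xa n hn).2 hq)) hne
    · exfalso
      apply hne
      have := zpowers_xa_eq_of_mem n hn (p := p + (n : ZMod (2 * n))) (q := q)
        ((mem_zpowers_xa n hn).2 hq)
      rwa [zpowers_xa_add_n n hn] at this
  · rintro (rfl | rfl)
    · exact ⟨Or.inl rfl, Or.inl rfl⟩
    · exact ⟨Or.inr (Or.inl rfl), Or.inr (Or.inl rfl)⟩


lemma mu_classification (n : ℕ) (hn : 2 ≤ n) (C : Subgroup (QuaternionGroup n)) :
    IsMuSubgroup C ↔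
      C = zpowers (a (1 : ZMod (2 * n)) : QuaternionGroup n) ∨
      ∃ i : Fin n, C = zpowers (xa (((i : ℕ) + 1 : ℕ) : ZMod (2 * n)) : QuaternionGroup n) := by
  constructor
  · rintro ⟨hcyc, hmax⟩
    obtain ⟨g, rfl⟩ := exists_zpowers_eq hcyc
    cases g with
    | a i =>
      exact Or.inl (hmax _ (_root_.isCyclic_zpowers _)
        (zpowers_le.2 ((mem_zpowers_a_one n hn).2 ⟨i, rfl⟩)))
    | xa j => exact Or.inr (zpowers_xa_normalize n hn j)
  · rintro (rfl | ⟨i, rfl⟩)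
    · exact mu_a_one n hn
    · exact mu_xa n hn _

/-- For n ≥ 2, the generalized quaternion group Q_{4n} is a flower group
with pistil C₀ = {1, a^n}; its petals are the n cyclic subgroups ⟨a^i b⟩ (1 ≤ i ≤ n) of
order 4 together with the cyclic subgroup ⟨a⟩ of order 2n. -/
theorem stmt16 (n : ℕ) (hn : 2 ≤ n) :
    IsFlowerGroup (Subgroup.zpowers (QuaternionGroup.a (n : ZMod (2 * n)))) ∧
    ((Subgroup.zpowers (QuaternionGroup.a (n : ZMod (2 * n))) : Set (QuaternionGroup n)) =
      {1, QuaternionGroup.a (n : ZMod (2 * n))}) ∧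
    (∀ C : Subgroup (QuaternionGroup n), IsMuSubgroup C ↔
      C = Subgroup.zpowers (QuaternionGroup.a (1 : ZMod (2 * n))) ∨
      ∃ i : Fin n, C = Subgroup.zpowers (QuaternionGroup.xa (((i : ℕ) + 1 : ℕ) : ZMod (2 * n)))) ∧
    Nat.card (Subgroup.zpowers (QuaternionGroup.a (1 : ZMod (2 * n)))) = 2 * n ∧
    (∀ i : Fin n,
      Nat.card (Subgroup.zpowers (QuaternionGroup.xa (((i : ℕ) + 1 : ℕ) : ZMod (2 * n)))) = 4) ∧
    Function.Injective (fun i : Fin n =>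
      Subgroup.zpowers (QuaternionGroup.xa (((i : ℕ) + 1 : ℕ) : ZMod (2 * n)))) := by
  have hN : NeZero n := ⟨by omega⟩
  refine ⟨⟨not_cyclic n hn, ?_⟩, ?_, mu_classification n hn, ?_, ?_, ?_⟩
  · intro C C' hC hC' hne
    rcases (mu_classification n hn C).1 hC with rfl | ⟨i, rfl⟩ <;>
      rcases (mu_classification n hn C').1 hC' with rfl | ⟨i', rfl⟩
    · exact absurd rfl hne
    · exact inf_a1_xa n hn _
    · rw [inf_comm]; exact inf_a1_xa n hn _
    · exact inf_xa_xa n hn _ _ hne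
  · ext g
    simp only [SetLike.mem_coe, Set.mem_insert_iff, Set.mem_singleton_iff]
    exact mem_zpowers_a_n n hn
  · rw [Nat.card_zpowers, orderOf_a_one]
  · intro i; rw [Nat.card_zpowers, orderOf_xa]
  · intro i i' h; exact xa_zpowers_inj n hn i i' (by simpa using h)
end
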